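/- arXiv:1605.06800 — 5 statements merged into one kernel-verified Lean document; each statement's English description precedes it below -/
import Mathlib

section
/- Assume the Ore setting and pairing data below, with star(s) ∈ S for every s ∈ S. Let x ∈ E², let y : M₂ → R be an R-linear functional, and let (s, z) and (s', z') be two witnesses for y. Suppose moreover that there exist r ∈ S and w ∈ M₂ with ∂ w = r • Φ(x). Then s⁻¹·star(z(Φ x)) = s'⁻¹·star(z'(Φ x)) in S⁻¹R; that is, the Blanchfield value of y at x does not depend on the choice of witness. -/
/-- In the Ore setting (ring with involution `R`, multiplicative submonoid
`S` of regular elements satisfying the left and right Ore conditions with `star S ⊆ S`, and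
two-sided Ore localization `A = S⁻¹R` with injective numerator map `ι` under which every
`s ∈ S` becomes invertible, with inverse `inv s`), given `R`-linear maps `bd : M₂ → M₁` and
`Φ : E₂ → M₁`, a class `x ∈ E₂`, a functional `y : M₂ → R` with two witnesses `(s, z)` and
`(s', z')` (i.e. `z (bd m) = y m * star s` and `z' (bd m) = y m * star s'` for all `m`),
and `r ∈ S`, `w ∈ M₂` with `bd w = r • Φ x`, the Blanchfield value of `y` at `x` does not
depend on the choice of witness: `s⁻¹ · star (z (Φ x)) = s'⁻¹ · star (z' (Φ x))` in `S⁻¹R`. -/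
theorem blanchfield_value_well_defined
    (R : Type*) [Ring R] [StarRing R] (S : Submonoid R)
    (hreg : ∀ s ∈ S, IsRegular s)
    (horeL : ∀ (r : R) (s : S), ∃ (r' : R) (s' : S), (s' : R) * r = r' * (s : R))
    (horeR : ∀ (r : R) (s : S), ∃ (r' : R) (s' : S), r * (s' : R) = (s : R) * r')
    (hstarS : ∀ s ∈ S, star s ∈ S)
    (A : Type*) [Ring A] (ι : R →+* A) (hι : Function.Injective ι)
    (inv : S → A)
    (hinv : ∀ s : S, inv s * ι s = 1) (hinv' : ∀ s : S, ι s * inv s = 1)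
    (hfrac : ∀ a : A, ∃ (r : R) (s : S), a = inv s * ι r)
    (E₂ M₁ M₂ : Type*) [AddCommGroup E₂] [AddCommGroup M₁] [AddCommGroup M₂]
    [Module R E₂] [Module R M₁] [Module R M₂]
    (bd : M₂ →ₗ[R] M₁) (Φ : E₂ →ₗ[R] M₁)
    (x : E₂) (y : M₂ →ₗ[R] R)
    (s s' : S) (z z' : M₁ →ₗ[R] R)
    (hz : ∀ m : M₂, z (bd m) = y m * star (s : R))
    (hz' : ∀ m : M₂, z' (bd m) = y m * star (s' : R))
    (r : S) (w : M₂) (hw : bd w = (r : R) • Φ x) :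
    inv s * ι (star (z (Φ x))) = inv s' * ι (star (z' (Φ x))) := by
  set t : S := ⟨star (r : R), hstarS r r.2⟩ with ht
  have hz1 : (r : R) * z (Φ x) = y w * star (s : R) := by
    have := hz w
    rwa [hw, map_smul, smul_eq_mul] at this
  have hz2 : (r : R) * z' (Φ x) = y w * star (s' : R) := by
    have := hz' w
    rwa [hw, map_smul, smul_eq_mul] at this
  have hs1 : star (z (Φ x)) * (t : R) = (s : R) * star (y w) := by
    have := congrArg star hz1
    simpa [star_mul] using this
  have hs2 : star (z' (Φ x)) * (t : R) = (s' : R) * star (y w) := by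
    have := congrArg star hz2
    simpa [star_mul] using this
  have key : ∀ (u : S) (c : R), star c * (t : R) = (u : R) * star (y w) →
      inv u * ι (star c) = ι (star (y w)) * inv t := by
    intro u c h
    have h1 : ι (star c) = ι (u : R) * ι (star (y w)) * inv t := by
      have : ι (star c) * ι (t : R) = ι (u : R) * ι (star (y w)) := by
        rw [← map_mul, ← map_mul, h]
      calc ι (star c) = ι (star c) * (ι (t : R) * inv t) := by rw [hinv' t, mul_one]
        _ = ι (star c) * ι (t : R) * inv t := by rw [mul_assoc]
        _ = ι (u : R) * ι (star (y w)) * inv t := by rw [this]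
    rw [h1, ← mul_assoc, ← mul_assoc, hinv u, one_mul]
  rw [key s _ hs1, key s' _ hs2]
end

section
/- Assume the Ore setting and pairing data below. Let x ∈ E², let y : M₂ → R be an R-linear functional with witness (s, z), let u ∈ E¹ and let v : M₁ → R be an R-linear functional. Define x' := x + d(u), y' : m ↦ y(m) + v(∂ m), and z' : m ↦ z(m) + v(m)·star(s). Then (s, z') is a witness for y', and the difference s⁻¹·star(z'(Φ x')) − s⁻¹·star(z(Φ x)) lies in R (in fact it equals the image of star(y(Ψ u)) + star(v(Φ x')) in S⁻¹R); that is, the Blanchfield value is unchanged modulo R when the cocycle representatives are changed by coboundaries. -/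
/-- In the Ore setting (ring with involution `R`, multiplicative submonoid
`S` of regular elements satisfying the left and right Ore conditions, two-sided Ore
localization `A = S⁻¹R` with injective numerator map `ι`, inverses `inv s` of elements of
`S`), with `R`-linear maps `d : E¹ → E²`, `bd : M₂ → M₁`, `Φ : E² → M₁`, `Ψ : E¹ → M₂`
satisfying `Φ ∘ d = bd ∘ Ψ`:  given `x ∈ E²`, a functional `y` with witness `(s, z)`,
`u ∈ E¹` and a functional `v : M₁ → R`, set `x' = x + d u`, `y' = y + v ∘ bd` and
`z' = z + v · star s`.  Then `(s, z')` is a witness for `y'`, and the difference of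
Blanchfield values `s⁻¹·star (z' (Φ x')) − s⁻¹·star (z (Φ x))` equals the image in `S⁻¹R`
of `star (y (Ψ u)) + star (v (Φ x'))`, an element of `R`. -/
theorem blanchfield_value_coboundary_invariance
    (R : Type*) [Ring R] [StarRing R] (S : Submonoid R)
    (hreg : ∀ s ∈ S, IsRegular s)
    (horeL : ∀ (r : R) (s : S), ∃ (r' : R) (s' : S), (s' : R) * r = r' * (s : R))
    (horeR : ∀ (r : R) (s : S), ∃ (r' : R) (s' : S), r * (s' : R) = (s : R) * r')
    (A : Type*) [Ring A] (ι : R →+* A) (hι : Function.Injective ι)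
    (inv : S → A)
    (hinv : ∀ s : S, inv s * ι s = 1) (hinv' : ∀ s : S, ι s * inv s = 1)
    (hfrac : ∀ a : A, ∃ (r : R) (s : S), a = inv s * ι r)
    (E₁ E₂ M₁ M₂ : Type*)
    [AddCommGroup E₁] [AddCommGroup E₂] [AddCommGroup M₁] [AddCommGroup M₂]
    [Module R E₁] [Module R E₂] [Module R M₁] [Module R M₂]
    (d : E₁ →ₗ[R] E₂) (bd : M₂ →ₗ[R] M₁) (Φ : E₂ →ₗ[R] M₁) (Ψ : E₁ →ₗ[R] M₂)
    (hcompat : ∀ u : E₁, Φ (d u) = bd (Ψ u))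
    (x : E₂) (y : M₂ →ₗ[R] R) (s : S) (z : M₁ →ₗ[R] R)
    (hz : ∀ m : M₂, z (bd m) = y m * star (s : R))
    (u : E₁) (v : M₁ →ₗ[R] R) :
    (∀ m : M₂, z (bd m) + v (bd m) * star (s : R) = (y m + v (bd m)) * star (s : R))
    ∧ inv s * ι (star (z (Φ (x + d u)) + v (Φ (x + d u)) * star (s : R)))
        - inv s * ι (star (z (Φ x)))
      = ι (star (y (Ψ u)) + star (v (Φ (x + d u)))) := by
  constructor
  · intro m
    rw [hz m, add_mul]
  · have h1 : z (Φ (x + d u)) = z (Φ x) + y (Ψ u) * star (s : R) := by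
      rw [map_add, map_add, hcompat, hz]
    have key : star (z (Φ (x + d u)) + v (Φ (x + d u)) * star (s : R))
        = star (z (Φ x)) + (s : R) * (star (y (Ψ u)) + star (v (Φ (x + d u)))) := by
      rw [h1, star_add, star_add, star_mul, star_mul, star_star, mul_add, add_assoc]
    rw [key, map_add, mul_add, add_sub_cancel_left, map_mul, ← mul_assoc, hinv s, one_mul]
end

section
/- Assume the Ore setting and pairing data below. Let x ∈ E², let y : M₂ → R be an R-linear functional with witness (s, z), let p, q ∈ R, and let q' ∈ R and s' ∈ S satisfy q'·s = s'·q (such q', s' exist by the Ore condition). Define q·y : m ↦ y(m)·star(q) and q'·z : m ↦ z(m)·star(q'). Then (s', q'·z) is a witness for q·y, and in S⁻¹R one has the exact sesquilinearity identity: s'⁻¹·star((q'·z)(Φ(p • x))) = q · ( s⁻¹·star(z(Φ x)) ) · star(p). -/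
/-- In the Ore setting (ring with involution `R`, multiplicative submonoid
`S` of regular elements satisfying the left and right Ore conditions, two-sided Ore
localization `A = S⁻¹R` with injective numerator map `ι`, inverses `inv s` of elements of
`S`), with `R`-linear maps `bd : M₂ → M₁` and `Φ : E² → M₁`:  given `x ∈ E²`, a functional
`y` with witness `(s, z)`, elements `p, q ∈ R`, and `q' ∈ R`, `s' ∈ S` with
`q' * s = s' * q`, the functional `q·y : m ↦ y m * star q` has witness `(s', q'·z)` where
`(q'·z) m = z m * star q'`, and the exact sesquilinearity identity holds in `S⁻¹R`:
`s'⁻¹ · star ((q'·z) (Φ (p • x))) = q · (s⁻¹ · star (z (Φ x))) · star p`. -/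
theorem blanchfield_value_sesquilinear
    (R : Type*) [Ring R] [StarRing R] (S : Submonoid R)
    (hreg : ∀ s ∈ S, IsRegular s)
    (horeL : ∀ (r : R) (s : S), ∃ (r' : R) (s' : S), (s' : R) * r = r' * (s : R))
    (horeR : ∀ (r : R) (s : S), ∃ (r' : R) (s' : S), r * (s' : R) = (s : R) * r')
    (A : Type*) [Ring A] (ι : R →+* A) (hι : Function.Injective ι)
    (inv : S → A)
    (hinv : ∀ s : S, inv s * ι s = 1) (hinv' : ∀ s : S, ι s * inv s = 1)
    (hfrac : ∀ a : A, ∃ (r : R) (s : S), a = inv s * ι r)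
    (E₂ M₁ M₂ : Type*) [AddCommGroup E₂] [AddCommGroup M₁] [AddCommGroup M₂]
    [Module R E₂] [Module R M₁] [Module R M₂]
    (bd : M₂ →ₗ[R] M₁) (Φ : E₂ →ₗ[R] M₁)
    (x : E₂) (y : M₂ →ₗ[R] R) (s : S) (z : M₁ →ₗ[R] R)
    (hz : ∀ m : M₂, z (bd m) = y m * star (s : R))
    (p q : R) (q' : R) (s' : S) (hore : q' * (s : R) = (s' : R) * q) :
    (∀ m : M₂, z (bd m) * star q' = (y m * star q) * star (s' : R))
    ∧ inv s' * ι (star (z (Φ (p • x)) * star q'))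
      = ι q * (inv s * ι (star (z (Φ x)))) * ι (star p) := by
  have key : inv s' * ι q' = ι q * inv s := by
    have h1 : ι q' * ι s = ι s' * ι q := by
      rw [← map_mul, ← map_mul, hore]
    calc inv s' * ι q' = inv s' * ι q' * (ι s * inv s) := by rw [hinv' s, mul_one]
      _ = inv s' * (ι q' * ι s) * inv s := by simp [mul_assoc]
      _ = inv s' * (ι s' * ι q) * inv s := by rw [h1]
      _ = (inv s' * ι s') * ι q * inv s := by simp [mul_assoc]
      _ = ι q * inv s := by rw [hinv s', one_mul]
  constructor
  · intro m
    rw [hz m, mul_assoc, mul_assoc, ← star_mul, ← star_mul, hore]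
  · have hΦ : z (Φ (p • x)) = p * z (Φ x) := by
      rw [map_smul, map_smul, smul_eq_mul]
    rw [hΦ, star_mul, star_mul, star_star, map_mul, map_mul, ← mul_assoc,
      ← mul_assoc, key]
    simp [mul_assoc]
end

section
/- Assume the hermitian setting below. Let x be a cocycle on M₂ and let y be an R-linear functional on M₂ with witness (s, z). Then s⁻¹·star(z(Φ x)) − s⁻¹·star(z(Φ' x)) lies in R; in fact this difference equals the image of star(y(H x)) under the embedding R → S⁻¹R. In particular, modulo R the Blanchfield value of y at x may be computed using Φ' in place of Φ. -/
/-- In the hermitian setting (ring with involution `R`, multiplicative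
submonoid `S` of regular elements satisfying the left and right Ore conditions, two-sided
Ore localization `A = S⁻¹R` with injective numerator map `ι`, inverses `inv s` of elements
of `S`; left `R`-modules `M₁, M₂, M₃` with `R`-linear maps `bd₂ : M₂ → M₁`,
`bd₃ : M₃ → M₂`; additive maps `Φ, Φ' : Hom_R(M₂,R) → M₁` and `H : Hom_R(M₂,R) → M₂` with
`Φ x − Φ' x = bd₂ (H x)` for every cocycle `x`):  for a cocycle `x` and a functional `y`
with witness `(s, z)`, the difference `s⁻¹·star (z (Φ x)) − s⁻¹·star (z (Φ' x))` equals
the image of `star (y (H x))` under `ι`; in particular it lies in `R`, so modulo `R` the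
Blanchfield value of `y` at `x` may be computed using `Φ'` in place of `Φ`. -/
theorem blanchfield_value_phi_vs_phi'
    (R : Type*) [Ring R] [StarRing R] (S : Submonoid R)
    (hreg : ∀ s ∈ S, IsRegular s)
    (horeL : ∀ (r : R) (s : S), ∃ (r' : R) (s' : S), (s' : R) * r = r' * (s : R))
    (horeR : ∀ (r : R) (s : S), ∃ (r' : R) (s' : S), r * (s' : R) = (s : R) * r')
    (A : Type*) [Ring A] (ι : R →+* A) (hι : Function.Injective ι)
    (inv : S → A)
    (hinv : ∀ s : S, inv s * ι s = 1) (hinv' : ∀ s : S, ι s * inv s = 1)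
    (hfrac : ∀ a : A, ∃ (r : R) (s : S), a = inv s * ι r)
    (M₁ M₂ M₃ : Type*) [AddCommGroup M₁] [AddCommGroup M₂] [AddCommGroup M₃]
    [Module R M₁] [Module R M₂] [Module R M₃]
    (bd₂ : M₂ →ₗ[R] M₁) (bd₃ : M₃ →ₗ[R] M₂)
    (Φ Φ' : (M₂ →ₗ[R] R) → M₁) (H : (M₂ →ₗ[R] R) → M₂)
    (hΦadd : ∀ a b : M₂ →ₗ[R] R, Φ (a + b) = Φ a + Φ b)
    (hΦ'add : ∀ a b : M₂ →ₗ[R] R, Φ' (a + b) = Φ' a + Φ' b)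
    (hHadd : ∀ a b : M₂ →ₗ[R] R, H (a + b) = H a + H b)
    (hdiff : ∀ x : M₂ →ₗ[R] R, (∀ m : M₃, x (bd₃ m) = 0) → Φ x - Φ' x = bd₂ (H x))
    (x : M₂ →ₗ[R] R) (hx : ∀ m : M₃, x (bd₃ m) = 0)
    (y : M₂ →ₗ[R] R) (s : S) (z : M₁ →ₗ[R] R)
    (hz : ∀ m : M₂, z (bd₂ m) = y m * star (s : R)) :
    inv s * ι (star (z (Φ x))) - inv s * ι (star (z (Φ' x)))
      = ι (star (y (H x))) := by
  have h1 : z (Φ x) - z (Φ' x) = y (H x) * star (s : R) := by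
    rw [← map_sub, hdiff x hx, hz]
  have h2 : star (z (Φ x)) - star (z (Φ' x)) = (s : R) * star (y (H x)) := by
    rw [← star_sub, h1, star_mul, star_star]
  rw [← mul_sub, ← map_sub, h2, map_mul, ← mul_assoc, hinv, one_mul]
end

section
/- Assume the hermitian setting below, with star(s) ∈ S for every s ∈ S. Let x and y be cocycles on M₂, let (r, w) be a witness for x and (s, z) a witness for y. Then s⁻¹·star(z(Φ x)) − w(Φ y)·(star(r))⁻¹ lies in R. Interpreting s⁻¹·star(z(Φ x)) modulo R as the Blanchfield pairing Bl(y, x) ∈ S⁻¹R/R, this says that Bl(y, x) = star(Bl(x, y)), i.e. the twisted Blanchfield pairing is hermitian. -/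
/-- The left `R`-module structure on the dual `Hom_R(M, R)` of a left `R`-module `M`
over a ring with involution, given by `(r·f)(m) = f(m) * star r`. -/
def rsmul {R M : Type*} [Ring R] [StarRing R] [AddCommGroup M] [Module R M]
    (r : R) (f : M →ₗ[R] R) : M →ₗ[R] R where
  toFun m := f m * star r
  map_add' x y := by simp [add_mul]
  map_smul' c x := by simp [mul_assoc]

/-- In the hermitian setting (ring with involution `R`, multiplicative
submonoid `S` of regular elements with `star S ⊆ S` satisfying the left and right Ore
conditions, two-sided Ore localization `A = S⁻¹R` with injective numerator map `ι`,
inverses `inv s` of elements of `S`; left `R`-modules `M₁, M₂, M₃` with `R`-linear maps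
`bd₂ : M₂ → M₁`, `bd₃ : M₃ → M₂`; additive maps `Φ, Φ' : Hom_R(M₂,R) → M₁` satisfying
`Φ (r·x) = r • Φ x` and `Φ' (r·x) = r • Φ' x`, and maps `Ψ : Hom_R(M₁,R) → M₂`,
`H : Hom_R(M₂,R) → M₂` with (i) `star (v (Ψ w)) = w (Φ v)`, (ii) `Φ' (w ∘ bd₂) = bd₂ (Ψ w)`,
(iii) `Φ x − Φ' x = bd₂ (H x)` for every cocycle `x`):  for cocycles `x, y` with witnesses
`(r, w)` for `x` and `(s, z)` for `y`, the element
`s⁻¹·star (z (Φ x)) − w (Φ y)·(star r)⁻¹` of `S⁻¹R` lies in `R`; i.e. the twisted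
Blanchfield pairing is hermitian: `Bl(y,x) = star (Bl(x,y))` in `S⁻¹R/R`. -/
theorem blanchfield_pairing_hermitian
    (R : Type*) [Ring R] [StarRing R] (S : Submonoid R)
    (hreg : ∀ s ∈ S, IsRegular s)
    (horeL : ∀ (r : R) (s : S), ∃ (r' : R) (s' : S), (s' : R) * r = r' * (s : R))
    (horeR : ∀ (r : R) (s : S), ∃ (r' : R) (s' : S), r * (s' : R) = (s : R) * r')
    (hstarS : ∀ s ∈ S, star s ∈ S)
    (A : Type*) [Ring A] (ι : R →+* A) (hι : Function.Injective ι)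
    (inv : S → A)
    (hinv : ∀ s : S, inv s * ι s = 1) (hinv' : ∀ s : S, ι s * inv s = 1)
    (hfrac : ∀ a : A, ∃ (r : R) (s : S), a = inv s * ι r)
    (M₁ M₂ M₃ : Type*) [AddCommGroup M₁] [AddCommGroup M₂] [AddCommGroup M₃]
    [Module R M₁] [Module R M₂] [Module R M₃]
    (bd₂ : M₂ →ₗ[R] M₁) (bd₃ : M₃ →ₗ[R] M₂)
    (Φ Φ' : (M₂ →ₗ[R] R) → M₁) (Ψ : (M₁ →ₗ[R] R) → M₂) (H : (M₂ →ₗ[R] R) → M₂)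
    (hΦadd : ∀ a b : M₂ →ₗ[R] R, Φ (a + b) = Φ a + Φ b)
    (hΦ'add : ∀ a b : M₂ →ₗ[R] R, Φ' (a + b) = Φ' a + Φ' b)
    (hΦsmul : ∀ (r : R) (v : M₂ →ₗ[R] R), Φ (rsmul r v) = r • Φ v)
    (hΦ'smul : ∀ (r : R) (v : M₂ →ₗ[R] R), Φ' (rsmul r v) = r • Φ' v)
    (hΨ : ∀ (w : M₁ →ₗ[R] R) (v : M₂ →ₗ[R] R), star (v (Ψ w)) = w (Φ v))
    (hΦ'bd : ∀ w : M₁ →ₗ[R] R, Φ' (w ∘ₗ bd₂) = bd₂ (Ψ w))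
    (hdiff : ∀ x : M₂ →ₗ[R] R, (∀ m : M₃, x (bd₃ m) = 0) → Φ x - Φ' x = bd₂ (H x))
    (x y : M₂ →ₗ[R] R)
    (hx : ∀ m : M₃, x (bd₃ m) = 0) (hy : ∀ m : M₃, y (bd₃ m) = 0)
    (r s : S) (w z : M₁ →ₗ[R] R)
    (hw : ∀ m : M₂, w (bd₂ m) = x m * star (r : R))
    (hz : ∀ m : M₂, z (bd₂ m) = y m * star (s : R)) :
    inv s * ι (star (z (Φ x))) - ι (w (Φ y)) * inv ⟨star (r : R), hstarS (r : R) r.2⟩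
      ∈ Set.range ι := by
  set t : S := ⟨star (r : R), hstarS (r : R) r.2⟩ with ht
  have h1 : z ∘ₗ bd₂ = rsmul (s : R) y := by
    ext m; simpa [rsmul] using hz m
  have h2 : bd₂ (Ψ z) = (s : R) • Φ' y := by
    rw [← hΦ'bd z, h1, hΦ'smul]
  have hΦ'y : Φ' y = Φ y - bd₂ (H y) := by
    rw [← hdiff y hy]; abel
  have h3 : x (Ψ z) * star (r : R)
      = (s : R) * w (Φ y) - (s : R) * (x (H y) * star (r : R)) := by
    have h := hw (Ψ z)
    rw [h2, map_smul, smul_eq_mul, hΦ'y, map_sub, hw, mul_sub] at h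
    exact h.symm
  have hsz : star (z (Φ x)) = x (Ψ z) := by
    rw [← hΨ z x, star_star]
  have key : inv s * ι (x (Ψ z)) = ι (w (Φ y)) * inv t - ι (x (H y)) := by
    have h4 : ι (x (Ψ z)) * ι (t : R) = ι (s : R) * ι (w (Φ y))
        - ι (s : R) * (ι (x (H y)) * ι (t : R)) := by
      rw [← map_mul, ← map_mul, ← map_mul, ← map_mul, ← map_sub, h3]
    have h5 : inv s * (ι (x (Ψ z)) * ι (t : R))
        = ι (w (Φ y)) - ι (x (H y)) * ι (t : R) := by
      rw [h4, mul_sub, ← mul_assoc, ← mul_assoc, hinv s, one_mul, one_mul]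
    have h6 : inv s * ι (x (Ψ z)) * (ι (t : R) * inv t)
        = (ι (w (Φ y)) - ι (x (H y)) * ι (t : R)) * inv t := by
      rw [← h5]; noncomm_ring
    rw [hinv' t, mul_one, sub_mul, mul_assoc, hinv' t, mul_one] at h6
    exact h6
  refine ⟨-(x (H y)), ?_⟩
  rw [map_neg, hsz, key]
  abel
end
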